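/- For all integers m and k, the group J_4(m,k) = ⟨t, y | t^4, y^{m-k} t^3 y^k t^2⟩ is isomorphic to the group F^{m,k,m-k} = ⟨R, S | R^2, R S^m R S^k R S^{m-k}⟩. -/

import Mathlib

section Helpers

lemma zp2 {G : Type*} [Group G] (x : G) : x ^ (2:ℤ) = x * x := by
  rw [show (2:ℤ) = 1 + 1 from rfl, zpow_add, zpow_one]

lemma zp3 {G : Type*} [Group G] (x : G) : x ^ (3:ℤ) = x * x ^ (2:ℤ) := by
  rw [show (3:ℤ) = 1 + 2 from rfl, zpow_add, zpow_one]

lemma zp4 {G : Type*} [Group G] (x : G) : x ^ (4:ℤ) = x ^ (2:ℤ) * x ^ (2:ℤ) := by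
  rw [show (4:ℤ) = 2 + 2 from rfl, zpow_add]

variable {G : Type*} [Group G] {H : Type*} [Group H]

/-- From the J₄ relations: `Y^k * T^2 = T * Y^(k-m)`. -/
lemma J4.hA (m k : ℤ) (T Y : G) (h4 : T ^ (4:ℤ) = 1)
    (hr : Y ^ (m-k) * T ^ (3:ℤ) * Y ^ k * T ^ (2:ℤ) = 1) :
    Y ^ (k:ℤ) * T ^ (2:ℤ) = T * Y ^ (k-m) := by
  calc Y ^ (k:ℤ) * T ^ (2:ℤ)
      = T * Y ^ (k-m) * (Y ^ (m-k) * (T ^ (4:ℤ))⁻¹ * Y ^ (k-m) *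
          (Y ^ (m-k) * T ^ (3:ℤ) * Y ^ k * T ^ (2:ℤ))) := by group
    _ = T * Y ^ (k-m) := by rw [h4, hr]; group

/-- From the J₄ relations: `T^2 * Y^(m-k) = Y^(-k) * T`. -/
lemma J4.hB (m k : ℤ) (T Y : G) (h4 : T ^ (4:ℤ) = 1)
    (hr : Y ^ (m-k) * T ^ (3:ℤ) * Y ^ k * T ^ (2:ℤ) = 1) :
    T ^ (2:ℤ) * Y ^ (m-k) = Y ^ (-k:ℤ) * T := by
  calc T ^ (2:ℤ) * Y ^ (m-k)
      = Y ^ (-k:ℤ) * T * (T ^ (4:ℤ))⁻¹ * (Y ^ (k-m) *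
          (Y ^ (m-k) * T ^ (3:ℤ) * Y ^ k * T ^ (2:ℤ)) * Y ^ (m-k)) := by group
    _ = Y ^ (-k:ℤ) * T := by rw [h4, hr]; group

/-- `(T * Y^{-m})` is an involution in J₄. -/
lemma J4.hC (m k : ℤ) (T Y : G) (h4 : T ^ (4:ℤ) = 1)
    (hr : Y ^ (m-k) * T ^ (3:ℤ) * Y ^ k * T ^ (2:ℤ) = 1) :
    (T * Y ^ (-m:ℤ)) ^ (2:ℤ) = 1 := by
  have hA := J4.hA m k T Y h4 hr
  have hB := J4.hB m k T Y h4 hr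
  calc (T * Y ^ (-m:ℤ)) ^ (2:ℤ)
      = T * Y ^ (k-m) * ((Y ^ (-k:ℤ) * T) * Y ^ (-m:ℤ)) := by rw [zp2]; group
    _ = T * Y ^ (k-m) * ((T ^ (2:ℤ) * Y ^ (m-k)) * Y ^ (-m:ℤ)) := by rw [← hB]
    _ = (T * Y ^ (k-m)) * T ^ (2:ℤ) * Y ^ (-k:ℤ) := by group
    _ = (Y ^ (k:ℤ) * T ^ (2:ℤ)) * T ^ (2:ℤ) * Y ^ (-k:ℤ) := by rw [← hA]
    _ = Y ^ (k:ℤ) * T ^ (4:ℤ) * Y ^ (-k:ℤ) := by group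
    _ = 1 := by rw [h4]; group

lemma J4.hD (m k : ℤ) (T Y : G) (h4 : T ^ (4:ℤ) = 1)
    (hr : Y ^ (m-k) * T ^ (3:ℤ) * Y ^ k * T ^ (2:ℤ) = 1) :
    T * Y ^ (-m:ℤ) * T = Y ^ (m:ℤ) := by
  have hC := J4.hC m k T Y h4 hr
  calc T * Y ^ (-m:ℤ) * T = (T * Y ^ (-m:ℤ)) ^ (2:ℤ) * Y ^ (m:ℤ) := by rw [zp2]; group
    _ = Y ^ (m:ℤ) := by rw [hC]; group

/-- Image of the second F-relator in J₄ is trivial. -/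
lemma J4.rel2 (m k : ℤ) (T Y : G) (h4 : T ^ (4:ℤ) = 1)
    (hr : Y ^ (m-k) * T ^ (3:ℤ) * Y ^ k * T ^ (2:ℤ) = 1) :
    (T * Y ^ (-m:ℤ)) * (Y⁻¹) ^ (m:ℤ) * (T * Y ^ (-m:ℤ)) * (Y⁻¹) ^ (k:ℤ) *
      (T * Y ^ (-m:ℤ)) * (Y⁻¹) ^ (m-k) = 1 := by
  have hB := J4.hB m k T Y h4 hr
  have hD := J4.hD m k T Y h4 hr
  calc (T * Y ^ (-m:ℤ)) * (Y⁻¹) ^ (m:ℤ) * (T * Y ^ (-m:ℤ)) * (Y⁻¹) ^ (k:ℤ) *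
      (T * Y ^ (-m:ℤ)) * (Y⁻¹) ^ (m-k)
      = (T * Y ^ (-m:ℤ) * T) * T⁻¹ * T⁻¹ * (T * Y ^ (-m:ℤ) * T) * Y ^ (-(m+k)) *
          (T * Y ^ (-m:ℤ) * T) * T⁻¹ * Y ^ (k-m) := by group
    _ = Y ^ (m:ℤ) * T⁻¹ * T⁻¹ * Y ^ (m:ℤ) * Y ^ (-(m+k)) *
          Y ^ (m:ℤ) * T⁻¹ * Y ^ (k-m) := by rw [hD]
    _ = Y ^ (m:ℤ) * (T ^ (4:ℤ))⁻¹ * (T ^ (2:ℤ) * Y ^ (m-k)) * T⁻¹ * Y ^ (k-m) := by group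
    _ = Y ^ (m:ℤ) * (T ^ (4:ℤ))⁻¹ * (Y ^ (-k:ℤ) * T) * T⁻¹ * Y ^ (k-m) := by rw [hB]
    _ = Y ^ (m:ℤ) * (T ^ (4:ℤ))⁻¹ * Y ^ (-m:ℤ) := by group
    _ = 1 := by rw [h4]; group

/-- From the F relations: `R * R = 1`. -/
lemma Fg.hRR (R : H) (h2 : R ^ (2:ℤ) = 1) : R * R = 1 := by
  calc R * R = R ^ (2:ℤ) := by rw [zp2]
    _ = 1 := h2

/-- Cyclic permutation of the F relator. -/
lemma Fg.hQ (m k : ℤ) (R S : H)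
    (hr : R * S ^ (m:ℤ) * R * S ^ (k:ℤ) * R * S ^ (m-k) = 1) :
    S ^ (m:ℤ) * R * S ^ (k:ℤ) * R * S ^ (m-k) * R = 1 := by
  calc S ^ (m:ℤ) * R * S ^ (k:ℤ) * R * S ^ (m-k) * R
      = R⁻¹ * (R * S ^ (m:ℤ) * R * S ^ (k:ℤ) * R * S ^ (m-k)) * R := by group
    _ = 1 := by rw [hr]; group

lemma Fg.hP (m k : ℤ) (R S : H)
    (hr : R * S ^ (m:ℤ) * R * S ^ (k:ℤ) * R * S ^ (m-k) = 1) :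
    R⁻¹ * S ^ (-m:ℤ) * R⁻¹ = S ^ (k:ℤ) * R * S ^ (m-k) := by
  calc R⁻¹ * S ^ (-m:ℤ) * R⁻¹
      = (S ^ (k:ℤ) * R * S ^ (m-k)) *
          (R * S ^ (m:ℤ) * R * S ^ (k:ℤ) * R * S ^ (m-k))⁻¹ := by group
    _ = S ^ (k:ℤ) * R * S ^ (m-k) := by rw [hr]; group

lemma Fg.hu2 (m k : ℤ) (R S : H) (h2 : R ^ (2:ℤ) = 1)
    (hr : R * S ^ (m:ℤ) * R * S ^ (k:ℤ) * R * S ^ (m-k) = 1) :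
    (R * S ^ (-m:ℤ)) ^ (2:ℤ) = S ^ (k:ℤ) * R * S ^ (-k:ℤ) := by
  have hRR := Fg.hRR R h2
  have hP := Fg.hP m k R S hr
  calc (R * S ^ (-m:ℤ)) ^ (2:ℤ)
      = (R * R) * (R⁻¹ * S ^ (-m:ℤ) * R⁻¹) * (R * R) * S ^ (-m:ℤ) := by rw [zp2]; group
    _ = (R * R) * (S ^ (k:ℤ) * R * S ^ (m-k)) * (R * R) * S ^ (-m:ℤ) := by rw [hP]
    _ = 1 * (S ^ (k:ℤ) * R * S ^ (m-k)) * 1 * S ^ (-m:ℤ) := by rw [hRR]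
    _ = S ^ (k:ℤ) * R * S ^ (-k:ℤ) := by group

/-- `(R * S^{-m})` has order dividing 4 in F. -/
lemma Fg.rel1 (m k : ℤ) (R S : H) (h2 : R ^ (2:ℤ) = 1)
    (hr : R * S ^ (m:ℤ) * R * S ^ (k:ℤ) * R * S ^ (m-k) = 1) :
    (R * S ^ (-m:ℤ)) ^ (4:ℤ) = 1 := by
  have hRR := Fg.hRR R h2
  have hu2 := Fg.hu2 m k R S h2 hr
  calc (R * S ^ (-m:ℤ)) ^ (4:ℤ)
      = (R * S ^ (-m:ℤ)) ^ (2:ℤ) * (R * S ^ (-m:ℤ)) ^ (2:ℤ) := by rw [zp4]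
    _ = (S ^ (k:ℤ) * R * S ^ (-k:ℤ)) * (S ^ (k:ℤ) * R * S ^ (-k:ℤ)) := by rw [hu2]
    _ = S ^ (k:ℤ) * (R * R) * S ^ (-k:ℤ) := by group
    _ = 1 := by rw [hRR]; group

/-- Image of the second J₄-relator in F is trivial. -/
lemma Fg.rel2 (m k : ℤ) (R S : H) (h2 : R ^ (2:ℤ) = 1)
    (hr : R * S ^ (m:ℤ) * R * S ^ (k:ℤ) * R * S ^ (m-k) = 1) :
    (S⁻¹) ^ (m-k) * (R * S ^ (-m:ℤ)) ^ (3:ℤ) * (S⁻¹) ^ (k:ℤ) *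
      (R * S ^ (-m:ℤ)) ^ (2:ℤ) = 1 := by
  have hRR := Fg.hRR R h2
  have hQ := Fg.hQ m k R S hr
  have hu2 := Fg.hu2 m k R S h2 hr
  calc (S⁻¹) ^ (m-k) * (R * S ^ (-m:ℤ)) ^ (3:ℤ) * (S⁻¹) ^ (k:ℤ) *
      (R * S ^ (-m:ℤ)) ^ (2:ℤ)
      = S ^ (k-m) * ((R * S ^ (-m:ℤ)) * (R * S ^ (-m:ℤ)) ^ (2:ℤ)) * S ^ (-k:ℤ) *
          (R * S ^ (-m:ℤ)) ^ (2:ℤ) := by rw [zp3]; group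
    _ = S ^ (k-m) * ((R * S ^ (-m:ℤ)) * (S ^ (k:ℤ) * R * S ^ (-k:ℤ))) * S ^ (-k:ℤ) *
          (S ^ (k:ℤ) * R * S ^ (-k:ℤ)) := by rw [hu2]
    _ = S ^ (k-m) * ((R*R) * R⁻¹) * S ^ (k-m) * ((R*R) * R⁻¹) * S ^ (-k:ℤ) *
          ((R*R) * R⁻¹) * S ^ (-k:ℤ) := by group
    _ = S ^ (k-m) * R⁻¹ * S ^ (k-m) * R⁻¹ * S ^ (-k:ℤ) * R⁻¹ * S ^ (-k:ℤ) := by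
          rw [hRR]; group
    _ = S ^ (k-m) * (S ^ (m:ℤ) * R * S ^ (k:ℤ) * R * S ^ (m-k) * R)⁻¹ * S ^ (m-k) := by
          group
    _ = 1 := by rw [hQ]; group

lemma PresentedGroup.rel_eq_one {α : Type*} {rels : Set (FreeGroup α)} {r : FreeGroup α}
    (h : r ∈ rels) : PresentedGroup.mk rels r = 1 :=
  (QuotientGroup.eq_one_iff _).mpr (Subgroup.subset_normalClosure h)

end Helpers

/-- For all integers m, k, the group J₄(m,k) = ⟨t, y | t⁴, y^{m-k} t³ y^k t²⟩ is isomorphic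
to F^{m,k,m-k} = ⟨R, S | R², R Sᵐ R Sᵏ R S^{m-k}⟩.
(Generators: `true ↦ t` resp. `R`, `false ↦ y` resp. `S`.) -/
theorem stmt_12 (m k : ℤ)
    (rels₁ rels₂ : Set (FreeGroup Bool))
    (h₁ : rels₁ = {FreeGroup.of true ^ (4 : ℤ),
      FreeGroup.of false ^ (m - k) * FreeGroup.of true ^ (3 : ℤ) *
        FreeGroup.of false ^ k * FreeGroup.of true ^ (2 : ℤ)})
    (h₂ : rels₂ = {FreeGroup.of true ^ (2 : ℤ),
      FreeGroup.of true * FreeGroup.of false ^ m * FreeGroup.of true * FreeGroup.of false ^ k *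
        FreeGroup.of true * FreeGroup.of false ^ (m - k)}) :
    Nonempty (PresentedGroup rels₁ ≃* PresentedGroup rels₂) := by
  subst h₁ h₂
  -- images of the generators in the two presented groups
  set rels₁ : Set (FreeGroup Bool) := {FreeGroup.of true ^ (4 : ℤ),
      FreeGroup.of false ^ (m - k) * FreeGroup.of true ^ (3 : ℤ) *
        FreeGroup.of false ^ k * FreeGroup.of true ^ (2 : ℤ)} with hrels₁
  set rels₂ : Set (FreeGroup Bool) := {FreeGroup.of true ^ (2 : ℤ),
      FreeGroup.of true * FreeGroup.of false ^ m * FreeGroup.of true * FreeGroup.of false ^ k *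
        FreeGroup.of true * FreeGroup.of false ^ (m - k)} with hrels₂
  -- generators
  let T : PresentedGroup rels₁ := PresentedGroup.of true
  let Y : PresentedGroup rels₁ := PresentedGroup.of false
  let R : PresentedGroup rels₂ := PresentedGroup.of true
  let S : PresentedGroup rels₂ := PresentedGroup.of false
  -- the relations hold for the images of the generators
  have h4 : T ^ (4:ℤ) = 1 := by
    have := PresentedGroup.rel_eq_one (rels := rels₁)
      (r := FreeGroup.of true ^ (4 : ℤ)) (Set.mem_insert _ _)
    simp only [map_zpow] at this; exact this
  have hrJ : Y ^ (m-k) * T ^ (3:ℤ) * Y ^ (k:ℤ) * T ^ (2:ℤ) = 1 := by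
    have := PresentedGroup.rel_eq_one (rels := rels₁)
      (r := FreeGroup.of false ^ (m - k) * FreeGroup.of true ^ (3 : ℤ) *
        FreeGroup.of false ^ k * FreeGroup.of true ^ (2 : ℤ))
      (Set.mem_insert_of_mem _ rfl)
    simp only [map_mul, map_zpow] at this; exact this
  have h2 : R ^ (2:ℤ) = 1 := by
    have := PresentedGroup.rel_eq_one (rels := rels₂)
      (r := FreeGroup.of true ^ (2 : ℤ)) (Set.mem_insert _ _)
    simp only [map_zpow] at this; exact this
  have hrF : R * S ^ (m:ℤ) * R * S ^ (k:ℤ) * R * S ^ (m-k) = 1 := by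
    have := PresentedGroup.rel_eq_one (rels := rels₂)
      (r := FreeGroup.of true * FreeGroup.of false ^ m * FreeGroup.of true *
        FreeGroup.of false ^ k * FreeGroup.of true * FreeGroup.of false ^ (m - k))
      (Set.mem_insert_of_mem _ rfl)
    simp only [map_mul, map_zpow] at this; exact this
  -- the forward map  t ↦ R S^{-m} , y ↦ S⁻¹
  let f : Bool → PresentedGroup rels₂ := fun b => if b then R * S ^ (-m:ℤ) else S⁻¹
  have hf : ∀ r ∈ rels₁, FreeGroup.lift f r = 1 := by
    rintro r (rfl | rfl)
    · simp only [map_zpow, FreeGroup.lift_apply_of, f, if_true]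
      exact Fg.rel1 m k R S h2 hrF
    · simp only [map_mul, map_zpow, FreeGroup.lift_apply_of, f, if_true, if_false]
      exact Fg.rel2 m k R S h2 hrF
  -- the inverse map  R ↦ T Y^{-m} , S ↦ Y⁻¹
  let g : Bool → PresentedGroup rels₁ := fun b => if b then T * Y ^ (-m:ℤ) else Y⁻¹
  have hg : ∀ r ∈ rels₂, FreeGroup.lift g r = 1 := by
    rintro r (rfl | rfl)
    · simp only [map_zpow, FreeGroup.lift_apply_of, g, if_true]
      exact J4.hC m k T Y h4 hrJ
    · simp only [map_mul, map_zpow, FreeGroup.lift_apply_of, g, if_true, if_false]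
      exact J4.rel2 m k T Y h4 hrJ
  let φ : PresentedGroup rels₁ →* PresentedGroup rels₂ := PresentedGroup.toGroup hf
  let ψ : PresentedGroup rels₂ →* PresentedGroup rels₁ := PresentedGroup.toGroup hg
  have hψφ : ψ.comp φ = MonoidHom.id _ := by
    ext x
    cases x
    · -- false : y
      show ψ (φ (PresentedGroup.of false)) = PresentedGroup.of false
      have h1 : φ (PresentedGroup.of false) = S⁻¹ := PresentedGroup.toGroup.of hf
      rw [h1, map_inv]
      have h2' : ψ (PresentedGroup.of false) = Y⁻¹ := PresentedGroup.toGroup.of hg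
      show (ψ S)⁻¹ = Y
      rw [h2']
      group
    · -- true : t
      show ψ (φ (PresentedGroup.of true)) = PresentedGroup.of true
      have h1 : φ (PresentedGroup.of true) = R * S ^ (-m:ℤ) := PresentedGroup.toGroup.of hf
      rw [h1, map_mul, map_zpow]
      have hR : ψ R = T * Y ^ (-m:ℤ) := PresentedGroup.toGroup.of hg
      have hS : ψ S = Y⁻¹ := PresentedGroup.toGroup.of hg
      rw [hR, hS]
      show (T * Y ^ (-m:ℤ)) * (Y⁻¹) ^ (-m:ℤ) = T
      group
  have hφψ : φ.comp ψ = MonoidHom.id _ := by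
    ext x
    cases x
    · show φ (ψ (PresentedGroup.of false)) = PresentedGroup.of false
      have h1 : ψ (PresentedGroup.of false) = Y⁻¹ := PresentedGroup.toGroup.of hg
      rw [h1, map_inv]
      have h2' : φ (PresentedGroup.of false) = S⁻¹ := PresentedGroup.toGroup.of hf
      show (φ Y)⁻¹ = S
      rw [h2']
      group
    · show φ (ψ (PresentedGroup.of true)) = PresentedGroup.of true
      have h1 : ψ (PresentedGroup.of true) = T * Y ^ (-m:ℤ) := PresentedGroup.toGroup.of hg
      rw [h1, map_mul, map_zpow]
      have hT : φ T = R * S ^ (-m:ℤ) := PresentedGroup.toGroup.of hf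
      have hY : φ Y = S⁻¹ := PresentedGroup.toGroup.of hf
      rw [hT, hY]
      show (R * S ^ (-m:ℤ)) * (S⁻¹) ^ (-m:ℤ) = R
      group
  exact ⟨MonoidHom.toMulEquiv φ ψ hψφ hφψ⟩
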